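/- Let Λ be the Leech lattice. The sublattices of Λ isomorphic to D_{24}(2) are in natural bijection with the frames of Λ, where a frame is a set of 24 distinct pairs ±v_i of norm-8 vectors of Λ all congruent to each other modulo 2Λ; the sublattice associated to a frame is generated by the vectors (±v_i ± v_j)/2. -/

import Mathlib

open Matrix Module

/-- An even unimodular positive definite lattice of rank `m`, presented by the Gram
matrix of a `ℤ`-basis.  The underlying `ℤ`-module is `Fin m → ℤ`. -/
structure EvenUnimodularLattice (m : ℕ) where
  gram : Matrix (Fin m) (Fin m) ℤ
  symm : gram.IsSymm
  posdef : ∀ x : Fin m → ℤ, x ≠ 0 → 0 < x ⬝ᵥ gram.mulVec x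
  even : ∀ x : Fin m → ℤ, 2 ∣ x ⬝ᵥ gram.mulVec x
  unimodular : gram.det = 1

namespace EvenUnimodularLattice

variable {m : ℕ} (Λ : EvenUnimodularLattice m)

/-- The bilinear form `(x, y)` of the lattice. -/
def inner (Λ : EvenUnimodularLattice m) (x y : Fin m → ℤ) : ℤ := x ⬝ᵥ Λ.gram.mulVec y

/-- Reduction modulo `2Λ`, identifying `Λ/2Λ` with `(F₂)^m` via the chosen basis. -/
def red (_Λ : EvenUnimodularLattice m) (x : Fin m → ℤ) : Fin m → ZMod 2 := fun i => (x i : ZMod 2)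

/-- A subspace `F ⊆ Λ/2Λ` is isotropic for the quadratic form
`q(x mod 2Λ) = (x,x)/2 mod 2`, i.e. `(x,x) ≡ 0 (mod 4)` for every lift `x` of an
element of `F`. -/
def Isotropic (F : Submodule (ZMod 2) (Fin m → ZMod 2)) : Prop :=
  ∀ x : Fin m → ℤ, Λ.red x ∈ F → (4 : ℤ) ∣ Λ.inner x x

/-- A maximal isotropic subspace of `Λ/2Λ`. -/
def MaximalIsotropic (F : Submodule (ZMod 2) (Fin m → ZMod 2)) : Prop :=
  Λ.Isotropic F ∧ ∀ F', Λ.Isotropic F' → F ≤ F' → F' = F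

end EvenUnimodularLattice

/-- The Leech lattice: the (unique) even unimodular positive definite lattice of
rank 24 with no roots. -/
def IsLeech (Λ : EvenUnimodularLattice 24) : Prop :=
  ∀ v : Fin 24 → ℤ, Λ.inner v v ≠ 2

/-- A frame of the Leech lattice: a set of 24 distinct pairs `±v` (48 vectors) of
norm-8 vectors, all congruent to each other modulo `2Λ`. -/
def IsFrame (Λ : EvenUnimodularLattice 24) (S : Set (Fin 24 → ℤ)) : Prop :=
  Nat.card S = 48 ∧ (∀ v ∈ S, -v ∈ S) ∧ (∀ v ∈ S, Λ.inner v v = 8) ∧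
  (∀ v ∈ S, ∀ u ∈ S, Λ.red v = Λ.red u)

/-- The sublattice associated to a frame (or part of a frame): it is generated by
the vectors `(u + v)/2` for distinct non-opposite `u, v` in the set. -/
def halfSumLattice (S : Set (Fin 24 → ℤ)) : Submodule ℤ (Fin 24 → ℤ) :=
  Submodule.span ℤ {x | ∃ u ∈ S, ∃ v ∈ S, v ≠ u ∧ v ≠ -u ∧ (2 : ℤ) • x = u + v}

/-- The root lattice `D₂₄ = {x ∈ ℤ²⁴ : ∑ xᵢ even}` with the standard inner product. -/
def D24 : Submodule ℤ (Fin 24 → ℤ) where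
  carrier := {x | (2 : ℤ) ∣ ∑ i, x i}
  add_mem' := by
    intro a b ha hb
    simpa [Finset.sum_add_distrib] using dvd_add ha hb
  zero_mem' := by simp
  smul_mem' := by
    intro c x hx
    simpa [Finset.mul_sum] using Dvd.dvd.mul_left hx c

/-- `N` is a sublattice of `Λ` isomorphic to `D₂₄(2)`, the `D₂₄` root lattice with
all inner products doubled. -/
def IsD24TwoSublattice (Λ : EvenUnimodularLattice 24)
    (N : Submodule ℤ (Fin 24 → ℤ)) : Prop :=
  ∃ φ : D24 →ₗ[ℤ] (Fin 24 → ℤ), Function.Injective φ ∧ LinearMap.range φ = N ∧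
    ∀ x y : D24, Λ.inner (φ x) (φ y) = 2 * ((x : Fin 24 → ℤ) ⬝ᵥ (y : Fin 24 → ℤ))

/-! ### Auxiliary material -/

section Bilinear

variable {m : ℕ} (Λ : EvenUnimodularLattice m)

lemma inner_eq_B (x y : Fin m → ℤ) :
    Λ.inner x y = Matrix.toLinearMap₂' ℤ Λ.gram x y := (Matrix.toLinearMap₂'_apply' _ _ _).symm

lemma lat_inner_comm (x y : Fin m → ℤ) : Λ.inner x y = Λ.inner y x := by
  unfold EvenUnimodularLattice.inner
  rw [Matrix.dotProduct_mulVec, ← Matrix.mulVec_transpose, Λ.symm.eq, dotProduct_comm]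

lemma lat_inner_sum_sum {n : ℕ} (a b : Fin n → ℤ) (u v : Fin n → Fin m → ℤ) :
    Λ.inner (∑ i, a i • u i) (∑ j, b j • v j)
      = ∑ i, ∑ j, a i * b j * Λ.inner (u i) (v j) := by
  simp only [inner_eq_B, map_sum, LinearMap.sum_apply, _root_.map_smul, LinearMap.smul_apply,
    smul_eq_mul, Finset.mul_sum]
  rw [Finset.sum_comm]
  exact Finset.sum_congr rfl fun i _ => Finset.sum_congr rfl fun j _ => by ring

lemma lat_inner_smul_left (c : ℤ) (x y : Fin m → ℤ) :
    Λ.inner (c • x) y = c * Λ.inner x y := by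
  simp only [inner_eq_B, _root_.map_smul, LinearMap.smul_apply, smul_eq_mul]

lemma lat_inner_smul_right (c : ℤ) (x y : Fin m → ℤ) :
    Λ.inner x (c • y) = c * Λ.inner x y := by
  simp only [inner_eq_B, _root_.map_smul, smul_eq_mul]

lemma lat_inner_add_left (x x' y : Fin m → ℤ) :
    Λ.inner (x + x') y = Λ.inner x y + Λ.inner x' y := by
  simp only [inner_eq_B, map_add, LinearMap.add_apply]

lemma lat_inner_add_right (x y y' : Fin m → ℤ) :
    Λ.inner x (y + y') = Λ.inner x y + Λ.inner x y' := by
  simp only [inner_eq_B, map_add]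

lemma lat_inner_sub_left (x x' y : Fin m → ℤ) :
    Λ.inner (x - x') y = Λ.inner x y - Λ.inner x' y := by
  simp only [inner_eq_B, map_sub, LinearMap.sub_apply]

lemma lat_inner_sub_right (x y y' : Fin m → ℤ) :
    Λ.inner x (y - y') = Λ.inner x y - Λ.inner x y' := by
  simp only [inner_eq_B, map_sub]

lemma lat_inner_neg_left (x y : Fin m → ℤ) : Λ.inner (-x) y = -Λ.inner x y := by
  simp only [inner_eq_B, map_neg, LinearMap.neg_apply]

lemma lat_inner_neg_right (x y : Fin m → ℤ) : Λ.inner x (-y) = -Λ.inner x y := by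
  simp only [inner_eq_B, map_neg]

end Bilinear

section Half

lemma exists_half {α : Type*} [AddCommGroup α] [DecidableEq α] :
    ∀ (n : ℕ) (t : Finset α), t.card = n → (∀ v ∈ t, -v ∈ t) → (∀ v ∈ t, v ≠ -v) →
    ∃ u : Finset α, u ⊆ t ∧ (∀ v ∈ t, v ∈ u ∨ -v ∈ u) ∧ (∀ v ∈ u, -v ∉ u) ∧
      t.card = 2 * u.card := by
  intro n
  induction n using Nat.strong_induction_on with
  | _ n ih =>
    intro t hcard hneg hnf
    rcases t.eq_empty_or_nonempty with rfl | ⟨a, ha⟩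
    · exact ⟨∅, by simp⟩
    · have hna : -a ∈ t := hneg a ha
      have hane : a ≠ -a := hnf a ha
      set t' := (t.erase a).erase (-a) with ht'
      have ht'sub : t' ⊆ t := (Finset.erase_subset _ _).trans (Finset.erase_subset _ _)
      have hmem' : ∀ v, v ∈ t' ↔ v ∈ t ∧ v ≠ a ∧ v ≠ -a := by
        intro v
        simp only [ht', Finset.mem_erase]
        tauto
      have hcard' : t'.card = n - 2 := by
        rw [ht', Finset.card_erase_of_mem (by simp [Finset.mem_erase, hane.symm, hna]),
          Finset.card_erase_of_mem ha, hcard]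
        omega
      have hn2 : 2 ≤ n := by
        have : ({a, -a} : Finset α) ⊆ t := by
          intro v hv; simp only [Finset.mem_insert, Finset.mem_singleton] at hv
          rcases hv with rfl | rfl <;> assumption
        have := Finset.card_le_card this
        rwa [Finset.card_pair hane, hcard] at this
      obtain ⟨u', hu'sub, hu'cov, hu'nf, hu'card⟩ :=
        ih (n - 2) (by omega) t' hcard'
          (fun v hv => by
            rw [hmem'] at hv ⊢
            refine ⟨hneg v hv.1, fun h => hv.2.2 (by rw [← h]; simp), fun h => hv.2.1 (by
              have : v = a := by have := congrArg Neg.neg h; simpa using this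
              exact this)⟩)
          (fun v hv => hnf v (ht'sub hv))
      have hanotu' : a ∉ u' := fun h => ((hmem' a).mp (hu'sub h)).2.1 rfl
      refine ⟨insert a u', ?_, ?_, ?_, ?_⟩
      · intro v hv
        rcases Finset.mem_insert.mp hv with rfl | hv
        · exact ha
        · exact ht'sub (hu'sub hv)
      · intro v hv
        by_cases h1 : v = a
        · left; simp [h1]
        by_cases h2 : v = -a
        · right; simp [h2]
        · rcases hu'cov v ((hmem' v).mpr ⟨hv, h1, h2⟩) with h | h
          · exact Or.inl (Finset.mem_insert_of_mem h)
          · exact Or.inr (Finset.mem_insert_of_mem h)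
      · intro v hv hnv
        rcases Finset.mem_insert.mp hv with rfl | hv
        · rcases Finset.mem_insert.mp hnv with h | h
          · exact hane h.symm
          · exact ((hmem' _).mp (hu'sub h)).2.2 rfl
        · rcases Finset.mem_insert.mp hnv with h | h
          · apply ((hmem' _).mp (hu'sub hv)).2.2
            have := congrArg Neg.neg h
            simp only [neg_neg] at this
            exact this
          · exact hu'nf v hv h
      · rw [Finset.card_insert_of_notMem hanotu', hcard]
        omega

end Half

section D24lemmas

lemma mem_D24 {x : Fin 24 → ℤ} : x ∈ D24 ↔ (2:ℤ) ∣ ∑ i, x i := Iff.rfl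

/-- `eᵢ - eⱼ` as an element of `D24`. -/
def Dv (i j : Fin 24) : D24 :=
  ⟨Pi.single i 1 - Pi.single j 1, by
    simp [mem_D24, Finset.sum_sub_distrib, Finset.sum_pi_single']⟩

/-- `eᵢ + eⱼ` as an element of `D24`. -/
def Sv (i j : Fin 24) : D24 :=
  ⟨Pi.single i 1 + Pi.single j 1, by
    simp [mem_D24, Finset.sum_add_distrib, Finset.sum_pi_single']⟩

lemma Sv_self (i j : Fin 24) : Sv i i = Sv i j + Dv i j := by
  apply Subtype.ext
  show _ = (_ + _ : Fin 24 → ℤ)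
  simp [Sv, Dv]

lemma two_smul_Dv (i j : Fin 24) : (2:ℤ) • Dv i j = Sv i i - Sv j j := by
  apply Subtype.ext
  show ((2:ℤ) • _ : Fin 24 → ℤ) = _
  simp [Sv, Dv, two_smul]
  abel

lemma two_smul_Sv (i j : Fin 24) : (2:ℤ) • Sv i j = Sv i i + Sv j j := by
  apply Subtype.ext
  show ((2:ℤ) • _ : Fin 24 → ℤ) = _
  simp [Sv, Dv, two_smul]

lemma D24.decomp (y : D24) :
    y = (∑ i, y.1 i • Dv i 0) + ((∑ i, y.1 i)/2) • (Sv 0 1 + Dv 0 1) := by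
  obtain ⟨k, hk⟩ := y.2
  have hk2 : (∑ i, y.1 i)/2 = k := by rw [hk]; exact Int.mul_ediv_cancel_left _ (by norm_num)
  apply Subtype.ext
  funext j
  simp only [Submodule.coe_add, SetLike.val_smul, AddSubmonoidClass.coe_finset_sum, hk2,
    Finset.sum_apply, Pi.add_apply, Pi.smul_apply, smul_eq_mul, Dv, Sv, Pi.sub_apply,
    Pi.single_apply, mul_sub, Finset.sum_sub_distrib, mul_ite, mul_one, mul_zero,
    Finset.sum_ite_eq', Finset.mem_univ, if_true]
  by_cases hj : j = 0 <;> simp [hj, hk] <;> ring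

lemma D24.mem_of_gens (φ : D24 →ₗ[ℤ] (Fin 24 → ℤ)) (M : Submodule ℤ (Fin 24 → ℤ))
    (h : ∀ i j : Fin 24, i ≠ j → φ (Dv i j) ∈ M ∧ φ (Sv i j) ∈ M) (y : D24) : φ y ∈ M := by
  rw [D24.decomp y]
  simp only [map_add, map_sum, _root_.map_smul]
  refine M.add_mem (Submodule.sum_mem _ fun i _ => ?_) (M.smul_mem _ (M.add_mem
    (h 0 1 (by decide)).2 (h 0 1 (by decide)).1))
  by_cases hi : i = 0
  · subst hi
    have : Dv 0 0 = 0 := by apply Subtype.ext; simp [Dv]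
    simp [this]
  · exact M.smul_mem _ (h i 0 hi).1

lemma Sv_ne_neg (i j : Fin 24) : Sv i i ≠ -Sv j j := by
  intro h
  have := congrArg (fun z : D24 => z.1 i) h
  simp only [Sv, Pi.neg_apply, Pi.add_apply, Pi.single_apply] at this
  by_cases hij : i = j <;> simp [hij] at this <;> omega

lemma Sv_inj {i j : Fin 24} (h : Sv i i = Sv j j) : i = j := by
  by_contra hij
  have := congrArg (fun z : D24 => z.1 i) h
  simp only [Sv, Pi.add_apply, Pi.single_apply] at this
  simp [hij, Ne.symm hij] at this

lemma dot_Sv_self (i : Fin 24) (y : Fin 24 → ℤ) :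
    ((Sv i i : D24) : Fin 24 → ℤ) ⬝ᵥ y = 2 * y i := by
  simp only [Sv, dotProduct, Pi.add_apply, Pi.single_apply, add_mul, ite_mul, one_mul,
    zero_mul, Finset.sum_add_distrib, Finset.sum_ite_eq', Finset.mem_univ, if_true]
  ring

lemma dot_Dv (i j : Fin 24) (y : Fin 24 → ℤ) :
    ((Dv i j : D24) : Fin 24 → ℤ) ⬝ᵥ y = y i - y j := by
  simp only [Dv, dotProduct, Pi.sub_apply, Pi.single_apply, sub_mul, ite_mul, one_mul,
    zero_mul, Finset.sum_sub_distrib, Finset.sum_ite_eq', Finset.mem_univ, if_true]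

lemma sumsq_one {n : ℕ} (z : Fin n → ℤ) (h : ∑ k, z k * z k = 1) :
    ∃ i, z = Pi.single i 1 ∨ z = Pi.single i (-1) := by
  have hex : ∃ i, z i ≠ 0 := by
    by_contra hc
    push_neg at hc
    simp [hc] at h
  obtain ⟨i, hi⟩ := hex
  have h1 : 1 ≤ z i * z i := by
    rcases hi.lt_or_gt with hlt | hlt <;> nlinarith
  have hsplit := (Finset.add_sum_erase Finset.univ (fun k => z k * z k) (Finset.mem_univ i)).symm
  have hrest_nonneg : 0 ≤ ∑ k ∈ Finset.univ.erase i, z k * z k :=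
    Finset.sum_nonneg fun k _ => mul_self_nonneg _
  have hzi : z i * z i = 1 := by omega
  have hrest : ∑ k ∈ Finset.univ.erase i, z k * z k = 0 := by omega
  have hall : ∀ k ∈ Finset.univ.erase i, z k * z k = 0 :=
    (Finset.sum_eq_zero_iff_of_nonneg fun k _ => mul_self_nonneg _).mp hrest
  have hz0 : ∀ k, k ≠ i → z k = 0 := by
    intro k hk
    have := hall k (Finset.mem_erase.mpr ⟨hk, Finset.mem_univ k⟩)
    exact mul_self_eq_zero.mp this
  have : z i = 1 ∨ z i = -1 := by
    rcases Int.isUnit_iff.mp (IsUnit.of_mul_eq_one _ hzi) with h' | h' <;> [left; right] <;>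
      exact h'
  refine ⟨i, ?_⟩
  rcases this with h' | h'
  · left
    funext k
    by_cases hk : k = i <;> simp [hk, h', Pi.single_apply, hz0 k]
  · right
    funext k
    by_cases hk : k = i <;> simp [hk, h', Pi.single_apply, hz0 k]

end D24lemmas

section Red

lemma red_eq_iff {Λ : EvenUnimodularLattice 24} {v u : Fin 24 → ℤ} :
    Λ.red v = Λ.red u ↔ ∀ k, (2:ℤ) ∣ v k - u k := by
  constructor
  · intro h k
    have := congrFun h k
    simp only [EvenUnimodularLattice.red] at this
    rw [ZMod.intCast_eq_intCast_iff, Int.modEq_iff_dvd] at this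
    exact_mod_cast (dvd_sub_comm).mp this
  · intro h
    funext k
    simp only [EvenUnimodularLattice.red]
    rw [ZMod.intCast_eq_intCast_iff, Int.modEq_iff_dvd]
    exact_mod_cast (dvd_sub_comm).mp (h k)

lemma red_neg {Λ : EvenUnimodularLattice 24} (v : Fin 24 → ℤ) : Λ.red (-v) = Λ.red v := by
  rw [red_eq_iff]
  intro k
  have : (-v) k - v k = (-2) * v k := by simp; ring
  rw [this]
  exact ⟨-(v k), by ring⟩

/-- Halve a vector with even coordinates. -/
lemma exists_half_vec {v : Fin 24 → ℤ} (h : ∀ k, (2:ℤ) ∣ v k) :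
    ∃ w : Fin 24 → ℤ, v = (2:ℤ) • w := by
  refine ⟨fun k => v k / 2, funext fun k => ?_⟩
  have := (h k).choose_spec
  simp only [Pi.smul_apply, smul_eq_mul]
  omega

lemma norm_ge_four (Λ : EvenUnimodularLattice 24) (hΛ : IsLeech Λ) {w : Fin 24 → ℤ}
    (hw : w ≠ 0) : 4 ≤ Λ.inner w w := by
  have h1 : 0 < Λ.inner w w := Λ.posdef w hw
  have h2 : 2 ∣ Λ.inner w w := Λ.even w
  have h3 : Λ.inner w w ≠ 2 := hΛ w
  omega

lemma frame_orth (Λ : EvenUnimodularLattice 24) (hΛ : IsLeech Λ) {u v : Fin 24 → ℤ}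
    (hu8 : Λ.inner u u = 8) (hv8 : Λ.inner v v = 8) (hred : Λ.red u = Λ.red v)
    (hne : v ≠ u) (hne' : v ≠ -u) : Λ.inner u v = 0 := by
  obtain ⟨w, hw⟩ := exists_half_vec (v := u - v) (by
    intro k
    exact (red_eq_iff.mp hred) k)
  obtain ⟨w', hw'⟩ := exists_half_vec (v := u + v) (by
    intro k
    have h1 := (red_eq_iff.mp hred) k
    have : (u + v) k = (u k - v k) + 2 * v k := by simp; ring
    rw [this]
    exact dvd_add h1 ⟨v k, rfl⟩)
  have e1 : Λ.inner (u - v) (u - v) = 16 - 2 * Λ.inner u v := by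
    rw [lat_inner_sub_left, lat_inner_sub_right, lat_inner_sub_right, hu8, hv8,
      lat_inner_comm Λ v u]
    ring
  have e2 : Λ.inner (u + v) (u + v) = 16 + 2 * Λ.inner u v := by
    rw [lat_inner_add_left, lat_inner_add_right, lat_inner_add_right, hu8, hv8,
      lat_inner_comm Λ v u]
    ring
  have h1 : Λ.inner (u - v) (u - v) = 4 * Λ.inner w w := by
    rw [hw, lat_inner_smul_left, lat_inner_smul_right]; ring
  have h2 : Λ.inner (u + v) (u + v) = 4 * Λ.inner w' w' := by
    rw [hw', lat_inner_smul_left, lat_inner_smul_right]; ring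
  have hwne : w ≠ 0 := by
    rintro rfl
    rw [smul_zero] at hw
    exact hne (sub_eq_zero.mp hw).symm
  have hw'ne : w' ≠ 0 := by
    rintro rfl
    rw [smul_zero] at hw'
    exact hne' (eq_neg_of_add_eq_zero_right hw')
  have g1 := norm_ge_four Λ hΛ hwne
  have g2 := norm_ge_four Λ hΛ hw'ne
  omega

end Red

section FramePhi

/-- Auxiliary: summing a single-supported coefficient. -/
lemma sum_single_smul {M : Type*} [AddCommMonoid M] [Module ℤ M]
    (v : Fin 24 → M) (i : Fin 24) (c : ℤ) :
    ∑ k, (Pi.single i c : Fin 24 → ℤ) k • v k = c • v i := by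
  rw [Finset.sum_eq_single i]
  · rw [Pi.single_eq_same]
  · intro k _ hk
    rw [Pi.single_eq_of_ne hk, zero_smul]
  · intro h
    exact absurd (Finset.mem_univ i) h

/-- The linear map `D24 → ℤ²⁴` obtained from a family `w` of vectors:
`x ↦ (∑ xᵢ wᵢ)/2`. -/
def framePhi (w : Fin 24 → Fin 24 → ℤ)
    (hdvd : ∀ (y : D24) (j : Fin 24), (2:ℤ) ∣ ∑ i, (y : Fin 24 → ℤ) i * w i j) :
    D24 →ₗ[ℤ] (Fin 24 → ℤ) where
  toFun y := fun j => (∑ i, (y : Fin 24 → ℤ) i * w i j) / 2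
  map_add' x y := by
    funext j
    obtain ⟨a, ha⟩ := hdvd x j
    obtain ⟨b, hb⟩ := hdvd y j
    have hs : ∑ i, ((x + y : D24) : Fin 24 → ℤ) i * w i j
        = (∑ i, (x : Fin 24 → ℤ) i * w i j) + ∑ i, (y : Fin 24 → ℤ) i * w i j := by
      rw [← Finset.sum_add_distrib]
      exact Finset.sum_congr rfl fun i _ => by
        simp only [Submodule.coe_add, Pi.add_apply, add_mul]
    simp only [Pi.add_apply]
    rw [hs, ha, hb]
    omega
  map_smul' c x := by
    funext j
    obtain ⟨a, ha⟩ := hdvd x j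
    have hs : ∑ i, ((c • x : D24) : Fin 24 → ℤ) i * w i j
        = c * ∑ i, (x : Fin 24 → ℤ) i * w i j := by
      rw [Finset.mul_sum]
      exact Finset.sum_congr rfl fun i _ => by
        simp only [SetLike.val_smul, Pi.smul_apply, smul_eq_mul, mul_assoc]
    simp only [RingHom.id_apply, Pi.smul_apply, smul_eq_mul]
    rw [hs, ha, show c * (2 * a) = 2 * (c * a) by ring,
      Int.mul_ediv_cancel_left _ two_ne_zero, Int.mul_ediv_cancel_left _ two_ne_zero]

lemma framePhi_two_smul (w : Fin 24 → Fin 24 → ℤ)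
    (hdvd : ∀ (y : D24) (j : Fin 24), (2:ℤ) ∣ ∑ i, (y : Fin 24 → ℤ) i * w i j) (y : D24) :
    (2:ℤ) • framePhi w hdvd y = ∑ i, (y : Fin 24 → ℤ) i • w i := by
  funext j
  simp only [Pi.smul_apply, smul_eq_mul, Finset.sum_apply]
  show 2 * ((∑ i, (y : Fin 24 → ℤ) i * w i j) / 2) = _
  rw [Int.mul_ediv_cancel' (hdvd y j)]

end FramePhi

section RangeHalfSum

lemma range_eq_halfSum (φ : D24 →ₗ[ℤ] (Fin 24 → ℤ)) (hinj : Function.Injective φ)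
    (S : Set (Fin 24 → ℤ)) (hchar : ∀ v, v ∈ S ↔ ∃ i, v = φ (Sv i i) ∨ v = -φ (Sv i i)) :
    halfSumLattice S = LinearMap.range φ := by
  have cancel : ∀ x y : Fin 24 → ℤ, (2:ℤ) • x = (2:ℤ) • y → x = y :=
    fun x y h => smul_right_injective _ two_ne_zero h
  have hne1 : ∀ i j : Fin 24, φ (Sv i i) = φ (Sv j j) → i = j := fun i j h => Sv_inj (hinj h)
  have hne2 : ∀ i j : Fin 24, φ (Sv i i) ≠ -φ (Sv j j) := by
    intro i j h
    rw [← map_neg] at h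
    exact Sv_ne_neg i j (hinj h)
  have keyS : ∀ i j : Fin 24, (2:ℤ) • φ (Sv i j) = φ (Sv i i) + φ (Sv j j) := by
    intro i j
    rw [← _root_.map_smul, two_smul_Sv, map_add]
  have keyD : ∀ i j : Fin 24, (2:ℤ) • φ (Dv i j) = φ (Sv i i) - φ (Sv j j) := by
    intro i j
    rw [← _root_.map_smul, two_smul_Dv, map_sub]
  apply le_antisymm
  · apply Submodule.span_le.mpr
    rintro x ⟨u, hu, v, hv, hvu, hvnu, h2x⟩
    obtain ⟨i, hi⟩ := (hchar u).mp hu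
    obtain ⟨j, hj⟩ := (hchar v).mp hv
    have hij : i ≠ j := by
      rintro rfl
      rcases hi with rfl | rfl <;> rcases hj with h | h
      · exact hvu h
      · exact hvnu h
      · exact hvnu (by rw [h, neg_neg])
      · exact hvu h
    rcases hi with rfl | rfl <;> rcases hj with rfl | rfl
    · exact ⟨Sv i j, (cancel _ _ (by rw [keyS, h2x])).symm⟩
    · exact ⟨Dv i j, (cancel _ _ (by rw [keyD, h2x]; ring)).symm⟩
    · exact ⟨Dv j i, (cancel _ _ (by rw [keyD, h2x]; ring)).symm⟩
    · exact ⟨-Sv i j, (cancel _ _ (by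
        rw [map_neg, smul_neg, keyS, h2x]; ring)).symm⟩
  · rintro _ ⟨y, rfl⟩
    refine D24.mem_of_gens φ _ (fun i j hij => ⟨?_, ?_⟩) y
    · apply Submodule.subset_span
      refine ⟨φ (Sv i i), (hchar _).mpr ⟨i, Or.inl rfl⟩,
        -φ (Sv j j), (hchar _).mpr ⟨j, Or.inr rfl⟩, ?_, ?_, ?_⟩
      · intro h
        exact hne2 i j h.symm
      · intro h
        have : φ (Sv j j) = φ (Sv i i) := by
          have := congrArg Neg.neg h
          simpa using this
        exact hij (hne1 j i this).symm
      · rw [keyD]; ring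
    · apply Submodule.subset_span
      refine ⟨φ (Sv i i), (hchar _).mpr ⟨i, Or.inl rfl⟩,
        φ (Sv j j), (hchar _).mpr ⟨j, Or.inl rfl⟩, ?_, ?_, ?_⟩
      · intro h
        exact hij (hne1 i j h.symm)
      · exact hne2 j i
      · rw [keyS]

end RangeHalfSum

section Master

lemma frame_master (Λ : EvenUnimodularLattice 24) (hΛ : IsLeech Λ) {S : Set (Fin 24 → ℤ)}
    (hS : IsFrame Λ S) :
    ∃ φ : D24 →ₗ[ℤ] (Fin 24 → ℤ), Function.Injective φ ∧
      LinearMap.range φ = halfSumLattice S ∧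
      (∀ x y : D24, Λ.inner (φ x) (φ y) = 2 * ((x : Fin 24 → ℤ) ⬝ᵥ (y : Fin 24 → ℤ))) ∧
      (∀ v, v ∈ S ↔ ∃ i, v = φ (Sv i i) ∨ v = -φ (Sv i i)) := by
  obtain ⟨hcard, hneg, hnorm, hred⟩ := hS
  have h0 : ∀ v ∈ S, v ≠ (0 : Fin 24 → ℤ) := by
    rintro v hv rfl
    have := hnorm 0 hv
    simp [EvenUnimodularLattice.inner] at this
  have hfin : S.Finite := by
    rw [Nat.card_coe_set_eq] at hcard
    exact Set.finite_of_ncard_ne_zero (by omega)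
  set t := hfin.toFinset with ht
  have htS : ∀ v, v ∈ t ↔ v ∈ S := fun v => hfin.mem_toFinset
  have htcard : t.card = 48 := by
    rw [ht, ← Set.ncard_eq_toFinset_card S hfin, ← Nat.card_coe_set_eq, hcard]
  obtain ⟨u, husub, hucov, hunf, hucard⟩ := exists_half 48 t htcard
    (fun v hv => (htS _).mpr (hneg v ((htS _).mp hv)))
    (fun v hv h => by
      apply h0 v ((htS _).mp hv)
      funext k
      have := congrFun h k
      simp only [Pi.neg_apply] at this
      show v k = 0
      omega)
  have hucard24 : Fintype.card ↥u = 24 := by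
    rw [Fintype.card_coe]
    omega
  set e : ↥u ≃ Fin 24 := Fintype.equivFinOfCardEq hucard24 with he
  set w : Fin 24 → Fin 24 → ℤ := fun i => ((e.symm i : ↥u) : Fin 24 → ℤ) with hwdef
  have hwu : ∀ i, w i ∈ u := fun i => (e.symm i).2
  have hwS : ∀ i, w i ∈ S := fun i => (htS _).mp (husub (hwu i))
  have hwinj : ∀ i j, w i = w j → i = j := by
    intro i j h
    have : e.symm i = e.symm j := Subtype.ext h
    exact e.symm.injective this
  have hwneg : ∀ i j, w i ≠ -w j := by
    intro i j h
    exact hunf (w j) (hwu j) (h ▸ hwu i)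
  have hcov : ∀ v ∈ S, ∃ i, v = w i ∨ v = -w i := by
    intro v hv
    rcases hucov v ((htS v).mpr hv) with h | h
    · refine ⟨e ⟨v, h⟩, Or.inl ?_⟩
      rw [hwdef]
      simp
    · refine ⟨e ⟨-v, h⟩, Or.inr ?_⟩
      rw [hwdef]
      simp
  have hdvd : ∀ (y : D24) (j : Fin 24), (2:ℤ) ∣ ∑ i, (y : Fin 24 → ℤ) i * w i j := by
    intro y j
    have hcoord : ∀ i : Fin 24, ((w i j : ℤ) : ZMod 2) = ((w 0 j : ℤ) : ZMod 2) :=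
      fun i => congrFun (hred (w i) (hwS i) (w 0) (hwS 0)) j
    have hcast : ((∑ i, (y : Fin 24 → ℤ) i * w i j : ℤ) : ZMod 2) = 0 := by
      push_cast
      calc ∑ i, ((y : Fin 24 → ℤ) i : ZMod 2) * ((w i j : ℤ) : ZMod 2)
          = ∑ i, ((y : Fin 24 → ℤ) i : ZMod 2) * ((w 0 j : ℤ) : ZMod 2) :=
            Finset.sum_congr rfl fun i _ => by rw [hcoord i]
        _ = (∑ i, ((y : Fin 24 → ℤ) i : ZMod 2)) * ((w 0 j : ℤ) : ZMod 2) :=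
            (Finset.sum_mul _ _ _).symm
        _ = 0 := by
            have hy : ((∑ i, (y : Fin 24 → ℤ) i : ℤ) : ZMod 2) = 0 :=
              (ZMod.intCast_zmod_eq_zero_iff_dvd _ 2).mpr y.2
            push_cast at hy
            rw [hy, zero_mul]
    exact_mod_cast (ZMod.intCast_zmod_eq_zero_iff_dvd _ 2).mp hcast
  set φ := framePhi w hdvd with hφ
  have hkey : ∀ y : D24, (2:ℤ) • φ y = ∑ i, (y : Fin 24 → ℤ) i • w i :=
    framePhi_two_smul w hdvd
  have cancel : ∀ x y : Fin 24 → ℤ, (2:ℤ) • x = (2:ℤ) • y → x = y :=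
    fun x y h => smul_right_injective _ two_ne_zero h
  have hφS : ∀ i, φ (Sv i i) = w i := by
    intro i
    apply cancel
    rw [hkey]
    have hSv : ((Sv i i : D24) : Fin 24 → ℤ) = Pi.single i (2:ℤ) := by
      show Pi.single i 1 + Pi.single i 1 = _
      rw [← Pi.single_add]
      norm_num
    rw [hSv, sum_single_smul]
  have horth : ∀ i j, Λ.inner (w i) (w j) = if i = j then 8 else 0 := by
    intro i j
    by_cases h : i = j
    · subst h
      simp [hnorm (w i) (hwS i)]
    · rw [if_neg h]
      exact frame_orth Λ hΛ (hnorm _ (hwS i)) (hnorm _ (hwS j))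
        (hred _ (hwS i) _ (hwS j))
        (fun hh => h (hwinj i j hh.symm)) (hwneg j i)
  have hinner : ∀ x y : D24,
      Λ.inner (φ x) (φ y) = 2 * ((x : Fin 24 → ℤ) ⬝ᵥ (y : Fin 24 → ℤ)) := by
    intro x y
    have h4 : (4:ℤ) * Λ.inner (φ x) (φ y) = Λ.inner ((2:ℤ) • φ x) ((2:ℤ) • φ y) := by
      rw [lat_inner_smul_left, lat_inner_smul_right]
      ring
    rw [hkey, hkey, lat_inner_sum_sum] at h4
    have hsum : ∑ i, ∑ j, (x : Fin 24 → ℤ) i * (y : Fin 24 → ℤ) j * Λ.inner (w i) (w j)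
        = 8 * ((x : Fin 24 → ℤ) ⬝ᵥ (y : Fin 24 → ℤ)) := by
      rw [dotProduct, Finset.mul_sum]
      refine Finset.sum_congr rfl fun i _ => ?_
      rw [Finset.sum_eq_single i]
      · rw [horth, if_pos rfl]
        ring
      · intro j _ hj
        rw [horth, if_neg (Ne.symm hj), mul_zero]
      · intro h
        exact absurd (Finset.mem_univ i) h
    rw [hsum] at h4
    omega
  have hinj : Function.Injective φ := by
    intro x y h
    have h0' : φ (x - y) = 0 := by rw [map_sub, h, sub_self]
    have := hinner (x - y) (x - y)
    rw [h0'] at this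
    have hz : (0:ℤ) = 2 * (((x - y : D24) : Fin 24 → ℤ) ⬝ᵥ ((x - y : D24) : Fin 24 → ℤ)) := by
      rw [← this]
      simp [EvenUnimodularLattice.inner]
    have hdot : ((x - y : D24) : Fin 24 → ℤ) ⬝ᵥ ((x - y : D24) : Fin 24 → ℤ) = 0 := by omega
    have hxy : ((x - y : D24) : Fin 24 → ℤ) = 0 := dotProduct_self_eq_zero.mp hdot
    have : x - y = 0 := Subtype.ext (by simpa using hxy)
    exact sub_eq_zero.mp this
  have hchar : ∀ v, v ∈ S ↔ ∃ i, v = φ (Sv i i) ∨ v = -φ (Sv i i) := by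
    intro v
    constructor
    · intro hv
      obtain ⟨i, hi⟩ := hcov v hv
      exact ⟨i, by rwa [hφS]⟩
    · rintro ⟨i, hi | hi⟩
      · rw [hi, hφS]
        exact hwS i
      · rw [hi, hφS]
        exact hneg _ (hwS i)
  exact ⟨φ, hinj, (range_eq_halfSum φ hinj S hchar).symm, hinner, hchar⟩

end Master

section Char

lemma frame_eq_char (Λ : EvenUnimodularLattice 24) (hΛ : IsLeech Λ) {S : Set (Fin 24 → ℤ)}
    (hS : IsFrame Λ S) :
    S = {v | v ∈ halfSumLattice S ∧ Λ.inner v v = 8 ∧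
      ∀ u ∈ halfSumLattice S, (4:ℤ) ∣ Λ.inner v u} := by
  obtain ⟨φ, hinj, hrange, hinner, hchar⟩ := frame_master Λ hΛ hS
  ext v
  simp only [Set.mem_setOf_eq]
  constructor
  · intro hv
    obtain ⟨i, hi⟩ := (hchar v).mp hv
    refine ⟨?_, hS.2.2.1 v hv, ?_⟩
    · rw [← hrange]
      rcases hi with rfl | rfl
      · exact ⟨Sv i i, rfl⟩
      · exact ⟨-Sv i i, by rw [map_neg]⟩
    · intro u hu
      rw [← hrange] at hu
      obtain ⟨y, rfl⟩ := hu
      have hdot : ((Sv i i : D24) : Fin 24 → ℤ) ⬝ᵥ (y : Fin 24 → ℤ)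
          = 2 * (y : Fin 24 → ℤ) i := dot_Sv_self i _
      rcases hi with rfl | rfl
      · rw [hinner, hdot]
        exact ⟨(y : Fin 24 → ℤ) i, by ring⟩
      · rw [lat_inner_neg_left, hinner, hdot]
        exact ⟨-((y : Fin 24 → ℤ) i), by ring⟩
  · rintro ⟨hvN, hv8, hdvd⟩
    rw [← hrange] at hvN
    obtain ⟨x, rfl⟩ := hvN
    have hxx : (x : Fin 24 → ℤ) ⬝ᵥ (x : Fin 24 → ℤ) = 4 := by
      have := hinner x x
      rw [hv8] at this
      omega
    have hpar : ∀ i j : Fin 24, (2:ℤ) ∣ (x : Fin 24 → ℤ) i - (x : Fin 24 → ℤ) j := by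
      intro i j
      have hmem : φ (Dv i j) ∈ halfSumLattice S := by
        rw [← hrange]
        exact ⟨Dv i j, rfl⟩
      have h4 := hdvd (φ (Dv i j)) hmem
      rw [hinner, dotProduct_comm, dot_Dv] at h4
      omega
    have heven : ∀ k, (2:ℤ) ∣ (x : Fin 24 → ℤ) k := by
      by_cases h2 : (2:ℤ) ∣ (x : Fin 24 → ℤ) 0
      · intro k
        have := hpar k 0
        omega
      · exfalso
        have hodd : ∀ k, ¬ (2:ℤ) ∣ (x : Fin 24 → ℤ) k := by
          intro k hk
          have := hpar k 0
          exact h2 (by omega)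
        have hge : ∀ k : Fin 24, (1:ℤ) ≤ (x : Fin 24 → ℤ) k * (x : Fin 24 → ℤ) k := by
          intro k
          have hne : (x : Fin 24 → ℤ) k ≠ 0 := fun h => hodd k (h ▸ dvd_zero 2)
          rcases hne.lt_or_gt with h | h <;> nlinarith
        have : (24:ℤ) ≤ ∑ k, (x : Fin 24 → ℤ) k * (x : Fin 24 → ℤ) k := by
          calc (24:ℤ) = ∑ _k : Fin 24, (1:ℤ) := by simp
            _ ≤ _ := Finset.sum_le_sum fun k _ => hge k
        rw [← dotProduct] at this
        omega
    obtain ⟨z, hz⟩ := exists_half_vec heven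
    have hzz : ∑ k, z k * z k = 1 := by
      have : (x : Fin 24 → ℤ) ⬝ᵥ (x : Fin 24 → ℤ) = 4 * ∑ k, z k * z k := by
        rw [hz, dotProduct, Finset.mul_sum]
        exact Finset.sum_congr rfl fun k _ => by
          simp only [Pi.smul_apply, smul_eq_mul]
          ring
      omega
    obtain ⟨i, hzi⟩ := sumsq_one z hzz
    apply (hchar _).mpr
    refine ⟨i, ?_⟩
    rcases hzi with rfl | rfl
    · left
      congr 1
      apply Subtype.ext
      rw [hz]
      show _ = Pi.single i 1 + Pi.single i 1
      rw [← Pi.single_add]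
      funext k
      simp [Pi.single_apply]
    · right
      rw [← map_neg]
      congr 1
      apply Subtype.ext
      rw [hz]
      show _ = -(Pi.single i 1 + Pi.single i 1)
      rw [← Pi.single_add]
      funext k
      simp [Pi.single_apply]
      split <;> norm_num

end Char

section Phi2Frame

lemma isFrame_of_phi (Λ : EvenUnimodularLattice 24) (φ : D24 →ₗ[ℤ] (Fin 24 → ℤ))
    (hinj : Function.Injective φ)
    (hinner : ∀ x y : D24, Λ.inner (φ x) (φ y) = 2 * ((x : Fin 24 → ℤ) ⬝ᵥ (y : Fin 24 → ℤ))) :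
    IsFrame Λ {v | ∃ i, v = φ (Sv i i) ∨ v = -φ (Sv i i)} := by
  set S := {v | ∃ i : Fin 24, v = φ (Sv i i) ∨ v = -φ (Sv i i)} with hSdef
  have hne1 : ∀ i j : Fin 24, φ (Sv i i) = φ (Sv j j) → i = j := fun i j h => Sv_inj (hinj h)
  have hne2 : ∀ i j : Fin 24, φ (Sv i i) ≠ -φ (Sv j j) := by
    intro i j h
    rw [← map_neg] at h
    exact Sv_ne_neg i j (hinj h)
  have hSvSv : ∀ i j : Fin 24, ((Sv i i : D24) : Fin 24 → ℤ) ⬝ᵥ ((Sv j j : D24) : Fin 24 → ℤ)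
      = if i = j then 4 else 0 := by
    intro i j
    rw [dot_Sv_self]
    by_cases h : i = j
    · subst h
      simp [Sv]
    · simp [Sv, Pi.single_eq_of_ne (Ne.symm h), h]
  have hnorm : ∀ i, Λ.inner (φ (Sv i i)) (φ (Sv i i)) = 8 := by
    intro i
    rw [hinner, hSvSv, if_pos rfl]
    norm_num
  constructor
  · -- cardinality
    have hbij : Function.Bijective (fun p : Fin 24 × Bool =>
        (⟨if p.2 then φ (Sv p.1 p.1) else -φ (Sv p.1 p.1), by
          rcases p with ⟨i, b⟩
          cases b
          · exact ⟨i, Or.inr rfl⟩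
          · exact ⟨i, Or.inl rfl⟩⟩ : S)) := by
      constructor
      · rintro ⟨i, bi⟩ ⟨j, bj⟩ h
        have h' := congrArg Subtype.val h
        simp only at h'
        cases bi <;> cases bj <;> simp only [if_true, if_false, Bool.false_eq_true] at h'
        · have : φ (Sv i i) = φ (Sv j j) := by
            have := congrArg Neg.neg h'
            simpa using this
          rw [hne1 i j this]
        · exact absurd h'.symm (hne2 j i)
        · exact absurd h' (hne2 i j)
        · rw [hne1 i j h']
      · rintro ⟨v, hv⟩
        obtain ⟨i, hi | hi⟩ := hv
        · exact ⟨(i, true), by simp [hi]⟩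
        · exact ⟨(i, false), by simp [hi]⟩
    have := Nat.card_eq_of_bijective _ hbij
    rw [← this]
    simp [Nat.card_eq_fintype_card]
  refine ⟨?_, ?_, ?_⟩
  · -- negation closed
    rintro v ⟨i, hi | hi⟩
    · exact ⟨i, Or.inr (by rw [hi])⟩
    · exact ⟨i, Or.inl (by rw [hi, neg_neg])⟩
  · -- norms
    rintro v ⟨i, hi | hi⟩
    · rw [hi]
      exact hnorm i
    · rw [hi, lat_inner_neg_left, lat_inner_neg_right, neg_neg]
      exact hnorm i
  · -- congruence mod 2
    have hredbase : ∀ i j : Fin 24, Λ.red (φ (Sv i i)) = Λ.red (φ (Sv j j)) := by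
      intro i j
      rw [red_eq_iff]
      intro k
      have : φ (Sv i i) - φ (Sv j j) = (2:ℤ) • φ (Dv i j) := by
        rw [← _root_.map_smul, two_smul_Dv, map_sub]
      calc (2:ℤ) ∣ ((2:ℤ) • φ (Dv i j)) k := ⟨φ (Dv i j) k, by simp⟩
        _ = _ := by rw [← this]; simp
    rintro v ⟨i, hi | hi⟩ u ⟨j, hj | hj⟩ <;> rw [hi, hj]
    · exact hredbase i j
    · rw [red_neg]
      exact hredbase i j
    · rw [red_neg]
      exact hredbase i j
    · rw [red_neg, red_neg]
      exact hredbase i j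

end Phi2Frame

/-- For the Leech lattice `Λ`, the map sending a frame `S` to the
sublattice generated by the vectors `(±vᵢ ± vⱼ)/2` is a bijection between frames of
`Λ` and sublattices of `Λ` isomorphic to `D₂₄(2)`. -/
theorem frames_biject_with_D24_sublattices (Λ : EvenUnimodularLattice 24)
    (hΛ : IsLeech Λ) :
    (∀ S : Set (Fin 24 → ℤ), IsFrame Λ S → IsD24TwoSublattice Λ (halfSumLattice S)) ∧
    (∀ S S' : Set (Fin 24 → ℤ), IsFrame Λ S → IsFrame Λ S' →
      halfSumLattice S = halfSumLattice S' → S = S') ∧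
    (∀ N : Submodule ℤ (Fin 24 → ℤ), IsD24TwoSublattice Λ N →
      ∃ S : Set (Fin 24 → ℤ), IsFrame Λ S ∧ halfSumLattice S = N) := by
  refine ⟨?_, ?_, ?_⟩
  · intro S hS
    obtain ⟨φ, hinj, hrange, hinner, _⟩ := frame_master Λ hΛ hS
    exact ⟨φ, hinj, hrange, hinner⟩
  · intro S S' hS hS' h
    rw [frame_eq_char Λ hΛ hS, frame_eq_char Λ hΛ hS', h]
  · rintro N ⟨φ, hinj, hrange, hinner⟩
    refine ⟨{v | ∃ i, v = φ (Sv i i) ∨ v = -φ (Sv i i)}, isFrame_of_phi Λ φ hinj hinner, ?_⟩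
    rw [range_eq_halfSum φ hinj {v | ∃ i, v = φ (Sv i i) ∨ v = -φ (Sv i i)}
      (fun v => Iff.rfl), hrange]
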